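/- Let d ≥ 1, let W ≤ S_d with |W| invertible in K, let K be an integral domain, let χ : W → U(K) be a character, and let E be a free K-module with finite basis (e_ℓ)_{ℓ=1}^n, with dual module E* and dual basis (e_ℓ*). Then: (a) there is a well-defined K-bilinear form B : [χ]^d(E) × [χ⁻¹]^d(E*) → K satisfying B(x₁χ⋯χx_d, x₁*χ⁻¹⋯χ⁻¹x_d*) = d_χ^W((⟨x_i,x_j*⟩)_{i,j=1}^d), where ⟨x,x*⟩ = x*(x); (b) for all j, k ∈ J(χ,n,d) (note J(χ,n,d) = J(χ⁻¹,n,d)) one has B(e_j, e_k*) = |W_j|·δ_{jk}, where e_j = e_{j₁}χ⋯χe_{j_d}, e_k* = e_{k₁}*χ⁻¹⋯χ⁻¹e_{k_d}* and δ is the Kronecker delta; (c) B is non-singular, and the bases (e_j)_{j∈J(χ,n,d)} of [χ]^d(E) and (|W_j|⁻¹·e_j*)_{j∈J(χ,n,d)} of [χ⁻¹]^d(E*) are dual with respect to B. -/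

import Mathlib

noncomputable section

open scoped TensorProduct

/-- The action of a permutation `σ` of `Fin d` on the `d`-th tensor power
`T^d(E)`, determined by `σ • (x₁ ⊗ ⋯ ⊗ x_d) = x_{σ⁻¹(1)} ⊗ ⋯ ⊗ x_{σ⁻¹(d)}`. -/
def permAct (K : Type*) [CommRing K] (E : Type*) [AddCommGroup E] [Module K E]
    (d : ℕ) (σ : Equiv.Perm (Fin d)) :
    (⨂[K] (_ : Fin d), E) ≃ₗ[K] ⨂[K] (_ : Fin d), E :=
  PiTensorProduct.reindex K (fun _ : Fin d => E) σ

/-- The submodule `_{χ⁻¹}T^d(E)` of `T^d(E)` generated by the elements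
`χ⁻¹(σ) z − σ z` for `σ ∈ W`; the quotient by it is the `d`-th
semi-symmetric power `[χ]^d(E)` of weight `χ`. -/
def chiKer {K : Type*} [CommRing K] (E : Type*) [AddCommGroup E] [Module K E]
    {d : ℕ} (W : Subgroup (Equiv.Perm (Fin d))) (χ : W →* Kˣ) :
    Submodule K (⨂[K] (_ : Fin d), E) :=
  Submodule.span K {w | ∃ (σ : W) (z : ⨂[K] (_ : Fin d), E),
    w = (((χ σ)⁻¹ : Kˣ) : K) • z - permAct K E d (σ : Equiv.Perm (Fin d)) z}

/-- The `d`-th semi-symmetric power `[χ]^d(E) = T^d(E)/_{χ⁻¹}T^d(E)`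
of weight `χ` of the `K`-module `E`. -/
abbrev SemiPow {K : Type*} [CommRing K] (E : Type*) [AddCommGroup E] [Module K E]
    {d : ℕ} (W : Subgroup (Equiv.Perm (Fin d))) (χ : W →* Kˣ) :=
  (⨂[K] (_ : Fin d), E) ⧸ chiKer E W χ

/-- The decomposable `d-χ`-vector `x₁ χ ⋯ χ x_d`. -/
def semiMk {K : Type*} [CommRing K] {E : Type*} [AddCommGroup E] [Module K E]
    {d : ℕ} (W : Subgroup (Equiv.Perm (Fin d))) (χ : W →* Kˣ)
    (x : Fin d → E) : SemiPow E W χ :=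
  Submodule.Quotient.mk (PiTensorProduct.tprod K x)


/-- The generalized Schur function
`d_χ^W(A) = Σ_{σ ∈ W} χ(σ) · a_{σ⁻¹(1),1} ⋯ a_{σ⁻¹(d),d}`. -/
def schurFn {K : Type*} [CommRing K] {d : ℕ} (W : Subgroup (Equiv.Perm (Fin d)))
    (χ : W →* Kˣ) (A : Matrix (Fin d) (Fin d) K) : K :=
  ∑ᶠ σ : W, ((χ σ : Kˣ) : K) * ∏ t : Fin d, A (((σ : Equiv.Perm (Fin d)))⁻¹ t) t

/-- Strict lexicographic comparison of functions. -/
def lexLT {ι : Type*} [LT ι] {α : Type*} [LT α] (f g : ι → α) : Prop :=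
  Pi.Lex (· < ·) (fun {_} => (· < ·)) f g

/-- The set `J(χ,n,d)` of multi-indices `i ∈ [1,n]^d` that are
lexicographically minimal in their `W`-orbit (for the action
`(σ i)_t = i_{σ⁻¹(t)}`) and on whose stabilizer `W_i` the character `χ`
is trivial. -/
def Jset {K : Type*} [CommRing K] {d : ℕ} (W : Subgroup (Equiv.Perm (Fin d)))
    (χ : W →* Kˣ) (n : ℕ) : Set (Fin d → Fin n) :=
  {i | (∀ σ : W, i ∘ ⇑(((σ : Equiv.Perm (Fin d)))⁻¹) = i → χ σ = 1) ∧
       (∀ σ : W, ¬ lexLT (i ∘ ⇑(((σ : Equiv.Perm (Fin d)))⁻¹)) i)}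

/-- The order of the stabilizer `W_i` of a multi-index `i`. -/
def stabCard {d : ℕ} (W : Subgroup (Equiv.Perm (Fin d))) {n : ℕ}
    (i : Fin d → Fin n) : ℕ :=
  Nat.card {σ : W // i ∘ ⇑(((σ : Equiv.Perm (Fin d)))⁻¹) = i}


section
open PiTensorProduct
variable {K : Type*} [CommRing K] {E : Type*} [AddCommGroup E] [Module K E] {d : ℕ}

lemma permAct_tprod (σ : Equiv.Perm (Fin d)) (x : Fin d → E) :
    permAct K E d σ (tprod K x) = tprod K (fun t => x (σ⁻¹ t)) :=
  PiTensorProduct.reindex_tprod σ x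

lemma permAct_permAct (σ τ : Equiv.Perm (Fin d)) (z : ⨂[K] (_ : Fin d), E) :
    permAct K E d σ (permAct K E d τ z) = permAct K E d (σ * τ) z :=
  PiTensorProduct.reindex_reindex τ σ z

variable (W : Subgroup (Equiv.Perm (Fin d))) (χ : W →* Kˣ) [Fintype W]

/-- The projector `|W|⁻¹ ∑ χ(σ) σ`. -/
def piProj : (⨂[K] (_ : Fin d), E) →ₗ[K] ⨂[K] (_ : Fin d), E :=
  Ring.inverse ((Nat.card W : K)) •
    ∑ σ : W, (((χ σ) : Kˣ) : K) • (permAct K E d (σ : Equiv.Perm (Fin d))).toLinearMap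

lemma piProj_apply (z : ⨂[K] (_ : Fin d), E) :
    piProj W χ z = Ring.inverse ((Nat.card W : K)) •
      ∑ σ : W, (((χ σ) : Kˣ) : K) • permAct K E d (σ : Equiv.Perm (Fin d)) z := by
  simp [piProj]

lemma piProj_permAct (σ : W) (z : ⨂[K] (_ : Fin d), E) :
    piProj W χ (permAct K E d (σ : Equiv.Perm (Fin d)) z)
      = (((χ σ)⁻¹ : Kˣ) : K) • piProj W χ z := by
  rw [piProj_apply, piProj_apply, smul_comm]
  congr 1
  rw [Finset.smul_sum]
  refine Fintype.sum_equiv (Equiv.mulRight σ) _ _ (fun τ => ?_)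
  simp only [Equiv.coe_mulRight, Subgroup.coe_mul]
  rw [permAct_permAct, smul_smul]
  congr 1
  rw [← Units.val_mul]
  have h : (χ σ)⁻¹ * χ (τ * σ) = χ τ := by rw [_root_.map_mul, mul_comm (χ τ) (χ σ), ← mul_assoc, inv_mul_cancel, one_mul]
  rw [h]

omit [Fintype W] in
lemma permAct_mem_chiKer (σ : W) (z : ⨂[K] (_ : Fin d), E) :
    (((χ σ)⁻¹ : Kˣ) : K) • z - permAct K E d (σ : Equiv.Perm (Fin d)) z ∈ chiKer E W χ :=
  Submodule.subset_span ⟨σ, z, rfl⟩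

lemma chiKer_le_ker (hcard : IsUnit ((Nat.card W : K))) :
    chiKer E W χ ≤ LinearMap.ker (piProj W χ) := by
  rw [chiKer, Submodule.span_le]
  rintro w ⟨σ, z, rfl⟩
  simp only [SetLike.mem_coe, LinearMap.mem_ker, map_sub, map_smul, piProj_permAct, sub_self]

lemma sub_piProj_mem_chiKer (hcard : IsUnit ((Nat.card W : K)))
    (z : ⨂[K] (_ : Fin d), E) : z - piProj W χ z ∈ chiKer E W χ := by
  have hz : z - piProj W χ z
      = Ring.inverse ((Nat.card W : K)) •
        ∑ σ : W, (((χ σ) : Kˣ) : K) •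
          ((((χ σ)⁻¹ : Kˣ) : K) • z - permAct K E d (σ : Equiv.Perm (Fin d)) z) := by
    rw [piProj_apply]
    simp only [smul_sub, Finset.sum_sub_distrib, smul_smul, Units.mul_inv, one_smul]
    rw [Finset.sum_const, Finset.card_univ]
    have h1 : Ring.inverse ((Nat.card W : K)) • (Fintype.card W) • z = z := by
      rw [← Nat.card_eq_fintype_card, ← Nat.cast_smul_eq_nsmul K, smul_smul,
        Ring.inverse_mul_cancel _ hcard, one_smul]
    rw [h1]
  rw [hz]
  exact Submodule.smul_mem _ _ (Submodule.sum_mem _ fun σ _ =>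
    Submodule.smul_mem _ _ (permAct_mem_chiKer W χ σ z))

lemma ker_le_chiKer (hcard : IsUnit ((Nat.card W : K))) :
    LinearMap.ker (piProj W χ) ≤ chiKer E W χ := by
  intro z hz
  rw [LinearMap.mem_ker] at hz
  have := sub_piProj_mem_chiKer W χ hcard z
  rwa [hz, sub_zero] at this

lemma chiKer_eq_ker (hcard : IsUnit ((Nat.card W : K))) :
    chiKer E W χ = LinearMap.ker (piProj W χ) :=
  le_antisymm (chiKer_le_ker W χ hcard) (ker_le_chiKer W χ hcard)
variable {n : ℕ} (b : Module.Basis (Fin n) K E)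

def tb (p : Fin d → Fin n) : ⨂[K] (_ : Fin d), E := tprod K fun t => b (p t)

omit [Fintype W] in
lemma permAct_tb (σ : Equiv.Perm (Fin d)) (p : Fin d → Fin n) :
    permAct K E d σ (tb b p) = tb b (p ∘ ⇑σ⁻¹) := by
  rw [tb, permAct_tprod]; rfl

def coordT (q : Fin d → Fin n) : (⨂[K] (_ : Fin d), E) →ₗ[K] K :=
  PiTensorProduct.lift
    ((MultilinearMap.mkPiAlgebra K (Fin d) K).compLinearMap fun t => b.coord (q t))

lemma coordT_tb (q p : Fin d → Fin n) :
    coordT b q (tb b p) = if p = q then 1 else 0 := by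
  classical
  rw [coordT, tb, PiTensorProduct.lift.tprod]
  simp only [MultilinearMap.compLinearMap_apply, MultilinearMap.mkPiAlgebra_apply,
    Module.Basis.coord_apply, Module.Basis.repr_self]
  rcases eq_or_ne p q with rfl | hpq
  · simp
  · obtain ⟨t, ht⟩ := Function.ne_iff.mp hpq
    rw [if_neg hpq]
    apply Finset.prod_eq_zero (Finset.mem_univ t)
    simp [Finsupp.single_apply, ht]

def sumChi (i q : Fin d → Fin n) : K :=
  ∑ σ : W, if i ∘ ⇑(((σ : Equiv.Perm (Fin d)))⁻¹) = q then ((χ σ : Kˣ) : K) else 0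

omit [Fintype W] in
lemma comp_coe_mul_inv (i : Fin d → Fin n) (σ τ : Equiv.Perm (Fin d)) :
    i ∘ ⇑((σ * τ)⁻¹) = (i ∘ ⇑τ⁻¹) ∘ ⇑σ⁻¹ := by
  ext t; simp [mul_inv_rev]

lemma sumChi_eq_zero [IsDomain K] (i q : Fin d → Fin n) (τ : W)
    (hτ : i ∘ ⇑(((τ : Equiv.Perm (Fin d)))⁻¹) = i) (hχ : χ τ ≠ 1) :
    sumChi W χ i q = 0 := by
  have key : sumChi W χ i q = (((χ τ)⁻¹ : Kˣ) : K) * sumChi W χ i q := by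
    simp only [sumChi]; rw [Finset.mul_sum]
    refine Fintype.sum_equiv (Equiv.mulRight τ) _ _ (fun σ => ?_)
    simp only [Equiv.coe_mulRight]
    have hcomp : i ∘ ⇑(((↑(σ * τ) : Equiv.Perm (Fin d)))⁻¹)
        = i ∘ ⇑(((↑σ : Equiv.Perm (Fin d)))⁻¹) := by
      rw [Subgroup.coe_mul, comp_coe_mul_inv, hτ]
    simp only [hcomp]
    by_cases h : i ∘ ⇑(((↑σ : Equiv.Perm (Fin d)))⁻¹) = q
    · rw [if_pos h, if_pos h]
      have hh : (χ τ)⁻¹ * χ (σ * τ) = χ σ := by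
        rw [_root_.map_mul, mul_comm (χ σ), ← mul_assoc, inv_mul_cancel, one_mul]
      rw [← hh, Units.val_mul]
    · rw [if_neg h, if_neg h, mul_zero]
  have h2 : ((((χ τ)⁻¹ : Kˣ) : K) - 1) * sumChi W χ i q = 0 := by
    rw [sub_mul, one_mul, ← key, sub_self]
  rcases mul_eq_zero.mp h2 with h | h
  · exact absurd (inv_eq_one.mp (Units.ext (by simpa using sub_eq_zero.mp h))) hχ
  · exact h

lemma sumChi_self (j : Fin d → Fin n)
    (hj : ∀ σ : W, j ∘ ⇑(((σ : Equiv.Perm (Fin d)))⁻¹) = j → χ σ = 1) :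
    sumChi W χ j j = (stabCard W j : K) := by
  classical
  have : ∀ σ : W, (if j ∘ ⇑(((σ : Equiv.Perm (Fin d)))⁻¹) = j then ((χ σ : Kˣ) : K) else 0)
      = (if j ∘ ⇑(((σ : Equiv.Perm (Fin d)))⁻¹) = j then 1 else 0) := by
    intro σ
    by_cases h : j ∘ ⇑(((σ : Equiv.Perm (Fin d)))⁻¹) = j
    · rw [if_pos h, if_pos h, hj σ h]; simp
    · rw [if_neg h, if_neg h]
  simp only [sumChi]; rw [Finset.sum_congr rfl fun σ _ => this σ, Finset.sum_boole, stabCard,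
    Nat.card_eq_fintype_card, Fintype.card_subtype]

omit [Fintype W] in
lemma Jset_eq_of_orbit {j k : Fin d → Fin n} (hj : j ∈ Jset W χ n) (hk : k ∈ Jset W χ n)
    (σ : W) (h : j ∘ ⇑(((σ : Equiv.Perm (Fin d)))⁻¹) = k) : j = k := by
  have tri := (Pi.isTrichotomous_lex (· < · : Fin d → Fin d → Prop)
    (fun {_} => (· < · : Fin n → Fin n → Prop)) (wellFounded_lt)).trichotomous
  rcases (show Pi.Lex (· < ·) (fun {_} => (· < ·)) j k ∨ j = k ∨
      Pi.Lex (· < ·) (fun {_} => (· < ·)) k j by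
    by_cases h1 : Pi.Lex (· < ·) (fun {_} => (· < ·)) j k
    · exact Or.inl h1
    by_cases h2 : Pi.Lex (· < ·) (fun {_} => (· < ·)) k j
    · exact Or.inr (Or.inr h2)
    exact Or.inr (Or.inl (tri j k h1 h2))) with hlt | heq | hgt
  · exfalso
    have hks : k ∘ ⇑(((↑(σ⁻¹) : Equiv.Perm (Fin d)))⁻¹) = j := by
      rw [← h]; ext t; simp
    exact hk.2 σ⁻¹ (by rw [hks]; exact hlt)
  · exact heq
  · exact absurd (by rw [h]; exact hgt) (hj.2 σ)

lemma sumChi_ne {j k : Fin d → Fin n} (hj : j ∈ Jset W χ n) (hk : k ∈ Jset W χ n)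
    (hne : j ≠ k) : sumChi W χ j k = 0 :=
  Finset.sum_eq_zero fun σ _ =>
    if_neg (fun h => hne (Jset_eq_of_orbit W χ hj hk σ h))

lemma piProj_tb (i : Fin d → Fin n) :
    piProj W χ (tb b i) = Ring.inverse ((Nat.card W : K)) •
      ∑ q : Fin d → Fin n, sumChi W χ i q • tb b q := by
  classical
  rw [piProj_apply]
  congr 1
  rw [eq_comm]
  calc ∑ q : Fin d → Fin n, sumChi W χ i q • tb b q
      = ∑ q : Fin d → Fin n, ∑ σ : W,
          (if i ∘ ⇑(((σ : Equiv.Perm (Fin d)))⁻¹) = q then ((χ σ : Kˣ) : K) • tb b q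
           else 0) := by
        refine Finset.sum_congr rfl fun q _ => ?_
        simp only [sumChi]; rw [Finset.sum_smul]
        exact Finset.sum_congr rfl fun σ _ => by rw [ite_smul, zero_smul]
    _ = ∑ σ : W, ∑ q : Fin d → Fin n,
          (if i ∘ ⇑(((σ : Equiv.Perm (Fin d)))⁻¹) = q then ((χ σ : Kˣ) : K) • tb b q
           else 0) := Finset.sum_comm
    _ = ∑ σ : W, ((χ σ : Kˣ) : K) • permAct K E d (σ : Equiv.Perm (Fin d)) (tb b i) := by
        refine Finset.sum_congr rfl fun σ _ => ?_
        rw [Finset.sum_ite_eq, if_pos (Finset.mem_univ _), permAct_tb]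

omit [Fintype W] in
lemma span_tb : Submodule.span K (Set.range (tb (d := d) b)) = ⊤ := by
  classical
  rw [eq_top_iff, ← PiTensorProduct.span_tprod_eq_top, Submodule.span_le]
  rintro _ ⟨f, rfl⟩
  have hf : (tprod K f : ⨂[K] (_ : Fin d), E)
      = tprod K (fun t => ∑ l : Fin n, b.repr (f t) l • b l) := by
    congr 1; ext t; rw [Module.Basis.sum_repr]
  rw [hf, MultilinearMap.map_sum]
  refine Submodule.sum_mem _ fun p _ => ?_
  have : (tprod K fun t => b.repr (f t) (p t) • b (p t))
      = (∏ t : Fin d, b.repr (f t) (p t)) • tb b p := by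
    rw [tb, MultilinearMap.map_smul_univ]
  rw [this]
  exact Submodule.smul_mem _ _ (Submodule.subset_span ⟨p, rfl⟩)

omit [Fintype W] in
lemma mk_permAct (σ : W) (z : ⨂[K] (_ : Fin d), E) :
    (Submodule.Quotient.mk (permAct K E d (σ : Equiv.Perm (Fin d)) z) : SemiPow E W χ)
      = (((χ σ)⁻¹ : Kˣ) : K) • Submodule.Quotient.mk z := by
  rw [← Submodule.Quotient.mk_smul, eq_comm, ← sub_eq_zero, ← Submodule.Quotient.mk_sub,
    Submodule.Quotient.mk_eq_zero]
  exact permAct_mem_chiKer W χ σ z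

lemma mk_piProj (hcard : IsUnit ((Nat.card W : K))) (z : ⨂[K] (_ : Fin d), E) :
    (Submodule.Quotient.mk (piProj W χ z) : SemiPow E W χ) = Submodule.Quotient.mk z := by
  rw [eq_comm, ← sub_eq_zero, ← Submodule.Quotient.mk_sub, Submodule.Quotient.mk_eq_zero]
  exact sub_piProj_mem_chiKer W χ hcard z

lemma stabCard_isUnit (hcard : IsUnit ((Nat.card W : K))) (i : Fin d → Fin n) :
    IsUnit ((stabCard W i : K)) := by
  classical
  let St : Subgroup W :=
    { carrier := {σ : W | i ∘ ⇑(((σ : Equiv.Perm (Fin d)))⁻¹) = i}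
      one_mem' := by funext t; simp
      mul_mem' := by
        intro σ τ hσ hτ
        show i ∘ ⇑(((↑(σ * τ) : Equiv.Perm (Fin d)))⁻¹) = i
        rw [Subgroup.coe_mul, comp_coe_mul_inv]
        show (i ∘ ⇑(((↑τ : Equiv.Perm (Fin d)))⁻¹)) ∘ _ = i
        rw [hτ]; exact hσ
      inv_mem' := by
        intro σ hσ
        show i ∘ ⇑(((↑σ⁻¹ : Equiv.Perm (Fin d)))⁻¹) = i
        have hσ' : i ∘ ⇑(((↑σ : Equiv.Perm (Fin d)))⁻¹) = i := hσ
        funext t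
        have := congrFun hσ' ((↑σ : Equiv.Perm (Fin d)) t)
        simpa using this.symm }
  have hdiv : stabCard W i * St.index = Nat.card W := by
    have : stabCard W i = Nat.card St := by
      rw [stabCard]
      exact Nat.card_congr (Equiv.subtypeEquivRight fun σ => Iff.rfl)
    rw [this]
    exact Subgroup.card_mul_index St
  have : IsUnit ((stabCard W i : K) * (St.index : K)) := by
    rw [← Nat.cast_mul, hdiv]; exact hcard
  exact isUnit_of_mul_isUnit_left this

lemma span_semiMk [IsDomain K] (hcard : IsUnit ((Nat.card W : K))) :
    Submodule.span K (Set.range fun j : Jset W χ n =>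
      (Submodule.Quotient.mk (tb b j) : SemiPow E W χ)) = ⊤ := by
  classical
  letI : LinearOrder (Lex (Fin d → Fin n)) :=
    @Pi.Lex.linearOrder (Fin d) (fun _ => Fin n) _
      (inferInstance : WellFoundedLT (Fin d)) _
  rw [eq_top_iff]
  intro x hx
  clear hx
  obtain ⟨y, rfl⟩ := Submodule.Quotient.mk_surjective _ x
  have hy : y ∈ Submodule.span K (Set.range (tb b)) := by rw [span_tb]; trivial
  induction hy using Submodule.span_induction with
  | mem w hw =>
    obtain ⟨i, rfl⟩ := hw
    by_cases hI : ∀ σ : W, i ∘ ⇑(((σ : Equiv.Perm (Fin d)))⁻¹) = i → χ σ = 1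
    · -- orbit has trivial character on stabilizer; pass to the lex-min element
      obtain ⟨σ₀, -, hmin⟩ := Finset.exists_min_image (Finset.univ : Finset W)
        (fun σ => toLex (i ∘ ⇑(((σ : Equiv.Perm (Fin d)))⁻¹))) ⟨1, Finset.mem_univ 1⟩
      set j := i ∘ ⇑(((σ₀ : Equiv.Perm (Fin d)))⁻¹) with hjdef
      have horb : ∀ τ : W, j ∘ ⇑(((τ : Equiv.Perm (Fin d)))⁻¹)
          = i ∘ ⇑(((↑(τ * σ₀) : Equiv.Perm (Fin d)))⁻¹) := by
        intro τ
        rw [Subgroup.coe_mul, comp_coe_mul_inv]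
      have hjmem : j ∈ Jset W χ n := by
        constructor
        · intro τ hτ
          have hρ : i ∘ ⇑(((↑(σ₀⁻¹ * τ * σ₀) : Equiv.Perm (Fin d)))⁻¹) = i := by
            funext t
            have h1 := congrFun hτ ((↑σ₀ : Equiv.Perm (Fin d)) t)
            simp only [hjdef, Function.comp_apply] at h1
            simp only [Subgroup.coe_mul, Subgroup.coe_inv, mul_inv_rev, inv_inv,
              Equiv.Perm.coe_mul, Function.comp_apply]
            simpa using h1
          have := hI _ hρ
          have hconj : χ (σ₀⁻¹ * τ * σ₀) = χ τ := by
            rw [_root_.map_mul, _root_.map_mul, map_inv, mul_comm ((χ σ₀)⁻¹) (χ τ),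
              mul_assoc, inv_mul_cancel, mul_one]
          rw [← hconj]; exact this
        · intro τ hlex
          have hle := hmin (τ * σ₀) (Finset.mem_univ _)
          rw [← horb] at hle
          exact absurd (show toLex (j ∘ ⇑(((τ : Equiv.Perm (Fin d)))⁻¹)) < toLex j from hlex)
            (not_lt_of_ge hle)
      have hmk : (Submodule.Quotient.mk (tb b j) : SemiPow E W χ)
          = (((χ σ₀)⁻¹ : Kˣ) : K) • Submodule.Quotient.mk (tb b i) := by
        rw [hjdef, ← permAct_tb, mk_permAct]
      have : (Submodule.Quotient.mk (tb b i) : SemiPow E W χ)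
          = ((χ σ₀ : Kˣ) : K) • Submodule.Quotient.mk (tb b j) := by
        rw [hmk, smul_smul, ← Units.val_mul, mul_inv_cancel, Units.val_one, one_smul]
      rw [this]
      exact Submodule.smul_mem _ _ (Submodule.subset_span ⟨⟨j, hjmem⟩, rfl⟩)
    · -- character nontrivial on stabilizer: the class vanishes
      push_neg at hI
      obtain ⟨τ, hτ, hχ⟩ := hI
      have hz : piProj W χ (tb b i) = 0 := by
        rw [piProj_tb]
        have : ∀ q : Fin d → Fin n, sumChi W χ i q • tb b q = 0 := fun q => by
          rw [sumChi_eq_zero W χ i q τ hτ hχ, zero_smul]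
        rw [Finset.sum_congr rfl fun q _ => this q, Finset.sum_const]; simp
      have : (Submodule.Quotient.mk (tb b i) : SemiPow E W χ) = 0 := by
        rw [← mk_piProj W χ hcard, hz, Submodule.Quotient.mk_zero]
      rw [this]
      exact Submodule.zero_mem _
  | zero => simp
  | add u v _ _ hu hv =>
    rw [Submodule.Quotient.mk_add]; exact Submodule.add_mem _ hu hv
  | smul c u _ hu =>
    rw [Submodule.Quotient.mk_smul]; exact Submodule.smul_mem _ _ hu

lemma coordT_piProj_tb (i q : Fin d → Fin n) :
    coordT b q (piProj W χ (tb b i))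
      = Ring.inverse ((Nat.card W : K)) * sumChi W χ i q := by
  classical
  rw [piProj_tb, map_smul, map_sum, smul_eq_mul]
  congr 1
  rw [Finset.sum_congr rfl fun p _ => by rw [map_smul, coordT_tb, smul_eq_mul]]
  rw [Finset.sum_congr rfl (fun p _ => by rw [mul_ite, mul_one, mul_zero]),
    Finset.sum_ite_eq', if_pos (Finset.mem_univ _)]

lemma li_semiMk [IsDomain K] (hcard : IsUnit ((Nat.card W : K))) :
    LinearIndependent K (fun j : Jset W χ n =>
      (Submodule.Quotient.mk (tb b j) : SemiPow E W χ)) := by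
  classical
  rw [linearIndependent_iff']
  intro s g hsum j0 hj0
  have hker : (∑ j ∈ s, g j • tb b (j : Fin d → Fin n)) ∈ chiKer E W χ := by
    rw [← Submodule.Quotient.mk_eq_zero, ← Submodule.mkQ_apply, map_sum]
    simpa [Submodule.mkQ_apply] using hsum
  rw [chiKer_eq_ker W χ hcard, LinearMap.mem_ker] at hker
  have h0 := congrArg (coordT b (j0 : Fin d → Fin n)) hker
  rw [map_sum, map_zero] at h0
  have hterm : ∀ j ∈ s, coordT b (j0 : Fin d → Fin n) (piProj W χ (g j • tb b j))
      = if j = j0 then g j0 * (Ring.inverse ((Nat.card W : K)) * (stabCard W (j0 : Fin d → Fin n) : K)) else 0 := by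
    intro j hj
    rw [map_smul, map_smul, coordT_piProj_tb, smul_eq_mul]
    rcases eq_or_ne j j0 with rfl | hne
    · rw [if_pos rfl, sumChi_self W χ _ (j.2.1)]
    · rw [if_neg hne, sumChi_ne W χ j.2 j0.2 (fun h => hne (Subtype.ext h)), mul_zero, mul_zero]
  rw [map_sum] at h0
  rw [Finset.sum_congr rfl hterm, Finset.sum_ite_eq' s, if_pos hj0] at h0
  have hunit : IsUnit (Ring.inverse ((Nat.card W : K)) * (stabCard W (j0 : Fin d → Fin n) : K)) :=
    (isUnit_ringInverse.mpr hcard).mul (stabCard_isUnit W hcard _)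
  rw [mul_comm] at h0
  exact (hunit.mul_right_eq_zero).mp h0

omit [Fintype W] in
lemma eval_update (y : Fin d → Module.Dual K E) (x : Fin d → E) (i : Fin d) (u : E) :
    (fun t => y t (Function.update x i u t))
      = Function.update (fun t => y t (x t)) i (y i u) := by
  funext t
  rcases eq_or_ne t i with rfl | h
  · simp
  · simp [Function.update_of_ne h]

def pairML : MultilinearMap K (fun _ : Fin d => E)
    ((⨂[K] (_ : Fin d), Module.Dual K E) →ₗ[K] K) where
  toFun x := PiTensorProduct.lift
    ((MultilinearMap.mkPiAlgebra K (Fin d) K).compLinearMap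
      fun t => Module.Dual.eval K E (x t))
  map_update_add' := by
    intro inst x i u v
    have hinst : inst = instDecidableEqFin d := Subsingleton.elim _ _
    subst hinst
    apply PiTensorProduct.ext
    apply MultilinearMap.ext
    intro y
    simp only [LinearMap.compMultilinearMap_apply, PiTensorProduct.lift.tprod,
      MultilinearMap.compLinearMap_apply, MultilinearMap.mkPiAlgebra_apply,
      Module.Dual.eval_apply, LinearMap.add_apply]
    rw [eval_update, eval_update, eval_update, map_add]
    exact MultilinearMap.map_update_add (MultilinearMap.mkPiAlgebra K (Fin d) K)
      (fun t => (y t) (x t)) i ((y i) u) ((y i) v)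
  map_update_smul' := by
    intro inst x i c u
    have hinst : inst = instDecidableEqFin d := Subsingleton.elim _ _
    subst hinst
    apply PiTensorProduct.ext
    apply MultilinearMap.ext
    intro y
    simp only [LinearMap.compMultilinearMap_apply, PiTensorProduct.lift.tprod,
      MultilinearMap.compLinearMap_apply, MultilinearMap.mkPiAlgebra_apply,
      Module.Dual.eval_apply, LinearMap.smul_apply]
    rw [eval_update, eval_update, map_smul]
    exact MultilinearMap.map_update_smul (MultilinearMap.mkPiAlgebra K (Fin d) K)
      (fun t => (y t) (x t)) i c ((y i) u)

def pairT : (⨂[K] (_ : Fin d), E) →ₗ[K] (⨂[K] (_ : Fin d), Module.Dual K E) →ₗ[K] K :=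
  PiTensorProduct.lift pairML

lemma pairT_tprod (x : Fin d → E) (y : Fin d → Module.Dual K E) :
    pairT (tprod K x) (tprod K y) = ∏ t : Fin d, y t (x t) := by
  rw [pairT, PiTensorProduct.lift.tprod]
  show PiTensorProduct.lift _ (tprod K y) = _
  rw [PiTensorProduct.lift.tprod]
  simp [Module.Dual.eval_apply]

omit [Fintype W] in
lemma pairT_perm (σ : Equiv.Perm (Fin d)) (u : ⨂[K] (_ : Fin d), E)
    (v : ⨂[K] (_ : Fin d), Module.Dual K E) :
    pairT (permAct K E d σ u) (permAct K (Module.Dual K E) d σ v) = pairT u v := by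
  have h : (((pairT (K := K) (E := E)).comp (permAct K E d σ).toLinearMap).compl₂
      (permAct K (Module.Dual K E) d σ).toLinearMap) = pairT := by
    apply PiTensorProduct.ext
    apply MultilinearMap.ext
    intro x
    apply PiTensorProduct.ext
    apply MultilinearMap.ext
    intro y
    simp only [LinearMap.compMultilinearMap_apply, LinearMap.compl₂_apply,
      LinearMap.coe_comp, LinearEquiv.coe_coe, Function.comp_apply]
    rw [permAct_tprod, permAct_tprod, pairT_tprod, pairT_tprod]
    exact Equiv.prod_comp σ⁻¹ fun t => y t (x t)
  calc pairT (permAct K E d σ u) (permAct K (Module.Dual K E) d σ v)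
      = (((pairT (K := K) (E := E)).comp (permAct K E d σ).toLinearMap).compl₂
          (permAct K (Module.Dual K E) d σ).toLinearMap) u v := rfl
    _ = pairT u v := by rw [h]

def B0 : (⨂[K] (_ : Fin d), E) →ₗ[K] (⨂[K] (_ : Fin d), Module.Dual K E) →ₗ[K] K :=
  ∑ σ : W, ((χ σ : Kˣ) : K) •
    ((pairT (K := K) (E := E)).comp (permAct K E d (σ : Equiv.Perm (Fin d))).toLinearMap)

lemma B0_apply (u : ⨂[K] (_ : Fin d), E) (v : ⨂[K] (_ : Fin d), Module.Dual K E) :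
    B0 W χ u v = ∑ σ : W, ((χ σ : Kˣ) : K)
      * pairT (permAct K E d (σ : Equiv.Perm (Fin d)) u) v := by
  simp [B0]

lemma B0_permAct_left (σ : W) (u : ⨂[K] (_ : Fin d), E)
    (v : ⨂[K] (_ : Fin d), Module.Dual K E) :
    B0 W χ (permAct K E d (σ : Equiv.Perm (Fin d)) u) v
      = (((χ σ)⁻¹ : Kˣ) : K) * B0 W χ u v := by
  rw [B0_apply, B0_apply, Finset.mul_sum]
  refine Fintype.sum_equiv (Equiv.mulRight σ) _ _ (fun τ => ?_)
  simp only [Equiv.coe_mulRight, Subgroup.coe_mul]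
  rw [permAct_permAct, ← mul_assoc]
  congr 1
  rw [← Units.val_mul]
  have hh : (χ σ)⁻¹ * χ (τ * σ) = χ τ := by
    rw [_root_.map_mul, mul_comm (χ τ) (χ σ), ← mul_assoc, inv_mul_cancel, one_mul]
  rw [hh]

lemma B0_permAct_right (σ : W) (u : ⨂[K] (_ : Fin d), E)
    (v : ⨂[K] (_ : Fin d), Module.Dual K E) :
    B0 W χ u (permAct K (Module.Dual K E) d (σ : Equiv.Perm (Fin d)) v)
      = ((χ σ : Kˣ) : K) * B0 W χ u v := by
  rw [B0_apply, B0_apply, Finset.mul_sum]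
  refine Fintype.sum_equiv (Equiv.mulLeft σ⁻¹) _ _ (fun τ => ?_)
  simp only [Equiv.coe_mulLeft, Subgroup.coe_mul, Subgroup.coe_inv]
  have h1 : permAct K E d (↑τ) u
      = permAct K E d (↑σ) (permAct K E d ((↑σ)⁻¹ * ↑τ) u) := by
    rw [permAct_permAct]
    congr 1
    group
  rw [h1, pairT_perm, ← mul_assoc]
  congr 1
  rw [← Units.val_mul]
  have hh : χ σ * χ (σ⁻¹ * τ) = χ τ := by
    rw [_root_.map_mul, ← mul_assoc, map_inv, mul_inv_cancel, one_mul]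
  rw [hh]

lemma chiKer_le_ker_B0 : chiKer E W χ ≤ LinearMap.ker (B0 W χ) := by
  rw [chiKer, Submodule.span_le]
  rintro w ⟨σ, z, rfl⟩
  simp only [SetLike.mem_coe, LinearMap.mem_ker, map_sub, map_smul]
  apply LinearMap.ext
  intro v
  simp only [LinearMap.sub_apply, LinearMap.smul_apply, LinearMap.zero_apply, smul_eq_mul]
  rw [B0_permAct_left, sub_self]

lemma B0_ker_right (u : ⨂[K] (_ : Fin d), E) (v : ⨂[K] (_ : Fin d), Module.Dual K E)
    (hv : v ∈ chiKer (Module.Dual K E) W χ⁻¹) : B0 W χ u v = 0 := by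
  have : chiKer (Module.Dual K E) W χ⁻¹ ≤ LinearMap.ker (B0 W χ u) := by
    rw [chiKer, Submodule.span_le]
    rintro w ⟨σ, z, rfl⟩
    simp only [SetLike.mem_coe, LinearMap.mem_ker, map_sub, map_smul]
    have hcoe : (((χ⁻¹ σ)⁻¹ : Kˣ) : K) = ((χ σ : Kˣ) : K) := by
      simp
    rw [hcoe, B0_permAct_right, smul_eq_mul, sub_self]
  exact this hv

def Bform : SemiPow E W χ →ₗ[K] SemiPow (Module.Dual K E) W χ⁻¹ →ₗ[K] K :=
  (Submodule.liftQ (chiKer (Module.Dual K E) W χ⁻¹)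
    ((Submodule.liftQ (chiKer E W χ) (B0 W χ) (chiKer_le_ker_B0 W χ)).flip)
    (by
      intro v hv
      rw [LinearMap.mem_ker]
      apply Submodule.linearMap_qext
      apply LinearMap.ext
      intro u
      simp only [LinearMap.coe_comp, Function.comp_apply, Submodule.mkQ_apply,
        LinearMap.flip_apply, Submodule.liftQ_apply, LinearMap.zero_comp,
        LinearMap.zero_apply]
      exact B0_ker_right W χ u v hv)).flip

lemma Bform_mk (u : ⨂[K] (_ : Fin d), E) (v : ⨂[K] (_ : Fin d), Module.Dual K E) :
    Bform (E := E) W χ (Submodule.Quotient.mk u) (Submodule.Quotient.mk v) = B0 W χ u v := by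
  simp [Bform]

lemma B0_tprod (x : Fin d → E) (y : Fin d → Module.Dual K E) :
    B0 W χ (tprod K x) (tprod K y) = schurFn W χ (Matrix.of fun i j => y j (x i)) := by
  rw [B0_apply, schurFn, finsum_eq_sum_of_fintype]
  refine Finset.sum_congr rfl fun σ _ => ?_
  rw [permAct_tprod, pairT_tprod]
  simp

omit [Fintype W] in
lemma prod_ite_eq_ite (f g : Fin d → Fin n) :
    (∏ t : Fin d, if f t = g t then (1 : K) else 0) = if f = g then 1 else 0 := by
  classical
  rcases eq_or_ne f g with rfl | h
  · simp
  · obtain ⟨t, ht⟩ := Function.ne_iff.mp h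
    rw [if_neg h]
    exact Finset.prod_eq_zero (Finset.mem_univ t) (if_neg ht)

lemma B0_tb_dual (j k : Fin d → Fin n) :
    B0 W χ (tb b j) (tb b.dualBasis k) = sumChi W χ j k := by
  classical
  rw [B0_apply]
  simp only [sumChi]
  refine Finset.sum_congr rfl fun σ _ => ?_
  rw [tb, permAct_tprod, tb, pairT_tprod]
  have hval : ∀ t : Fin d,
      b.dualBasis (k t) (b (j (((σ : Equiv.Perm (Fin d)))⁻¹ t)))
        = if (j ∘ ⇑(((σ : Equiv.Perm (Fin d)))⁻¹)) t = k t then (1 : K) else 0 := by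
    intro t
    rw [Module.Basis.dualBasis_apply_self]
    rfl
  rw [Finset.prod_congr rfl fun t _ => hval t, prod_ite_eq_ite, mul_ite, mul_one, mul_zero]

omit [Fintype W] in
lemma Jset_inv : Jset W χ⁻¹ n = Jset W χ n := by
  ext i
  simp only [Jset, Set.mem_setOf_eq, MonoidHom.inv_apply, inv_eq_one]

end


open Classical in
/-- Theorem III.1 (i), (iii). There is a (well-defined)
bilinear form `B : [χ]^d(E) × [χ⁻¹]^d(E*) → K` with
`B(x₁χ⋯χx_d, x₁*χ⁻¹⋯χ⁻¹x_d*) = d_χ^W((⟨x_i,x_j*⟩))`; on basis vectors it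
satisfies `B(e_j, e_k*) = |W_j| δ_{jk}` for `j,k ∈ J(χ,n,d)`; it is
non-singular, and `(e_j)_j`, `(|W_j|⁻¹ e_j*)_j` is a pair of dual bases. -/
theorem semiPow_pairing {K : Type*} [CommRing K] [IsDomain K]
    {E : Type*} [AddCommGroup E] [Module K E]
    {d : ℕ} (W : Subgroup (Equiv.Perm (Fin d))) (χ : W →* Kˣ)
    (hcard : IsUnit ((Nat.card W : K)))
    {n : ℕ} (b : Module.Basis (Fin n) K E) :
    ∃ B : SemiPow E W χ →ₗ[K] SemiPow (Module.Dual K E) W χ⁻¹ →ₗ[K] K,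
      (∀ (x : Fin d → E) (y : Fin d → Module.Dual K E),
        B (semiMk W χ x) (semiMk W χ⁻¹ y)
          = schurFn W χ (Matrix.of fun i j => y j (x i))) ∧
      (∀ j k : Fin d → Fin n, j ∈ Jset W χ n → k ∈ Jset W χ n →
        B (semiMk W χ (fun t => b (j t))) (semiMk W χ⁻¹ (fun t => b.dualBasis (k t)))
          = (stabCard W j : K) * (if j = k then 1 else 0)) ∧
      Function.Bijective B ∧ Function.Bijective B.flip ∧
      (∀ j k : Fin d → Fin n, j ∈ Jset W χ n → k ∈ Jset W χ n →
        B (semiMk W χ (fun t => b (j t)))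
          (Ring.inverse ((stabCard W k : K)) •
            semiMk W χ⁻¹ (fun t => b.dualBasis (k t)))
          = if j = k then 1 else 0) := by
  classical
  haveI : Fintype W := Fintype.ofFinite _
  -- the basic evaluations
  have hmk2 : ∀ (j k : Fin d → Fin n),
      Bform (E := E) W χ (Submodule.Quotient.mk (tb b j))
        (Submodule.Quotient.mk (tb b.dualBasis k)) = sumChi W χ j k := by
    intro j k
    rw [Bform_mk, B0_tb_dual]
  have hJK : ∀ j k : Fin d → Fin n, j ∈ Jset W χ n → k ∈ Jset W χ n →
      Bform (E := E) W χ (semiMk W χ (fun t => b (j t)))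
        (semiMk W χ⁻¹ (fun t => b.dualBasis (k t)))
        = (stabCard W j : K) * (if j = k then 1 else 0) := by
    intro j k hj hk
    have : semiMk W χ (fun t => b (j t)) = Submodule.Quotient.mk (tb b j) := rfl
    rw [this]
    have : semiMk W χ⁻¹ (fun t => b.dualBasis (k t))
        = Submodule.Quotient.mk (tb b.dualBasis k) := rfl
    rw [this, hmk2 j k]
    rcases eq_or_ne j k with rfl | hne
    · rw [if_pos rfl, mul_one, sumChi_self W χ j hj.1]
    · rw [if_neg hne, mul_zero, sumChi_ne W χ hj hk hne]
  -- bases of the two semi-symmetric powers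
  haveI : Fintype ↥(Jset W χ n) := Fintype.ofFinite _
  have hcard' : IsUnit ((Nat.card W : K)) := hcard
  let basE : Module.Basis ↥(Jset W χ n) K (SemiPow E W χ) :=
    Module.Basis.mk (li_semiMk W χ b hcard) (span_semiMk W χ b hcard).ge
  let basD0 : Module.Basis ↥(Jset W χ⁻¹ n) K (SemiPow (Module.Dual K E) W χ⁻¹) :=
    Module.Basis.mk (li_semiMk W χ⁻¹ b.dualBasis hcard) (span_semiMk W χ⁻¹ b.dualBasis hcard).ge
  let basD : Module.Basis ↥(Jset W χ n) K (SemiPow (Module.Dual K E) W χ⁻¹) :=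
    basD0.reindex (Equiv.setCongr (Jset_inv W χ))
  have hbasE : ∀ j : ↥(Jset W χ n),
      basE j = Submodule.Quotient.mk (tb b (j : Fin d → Fin n)) := by
    intro j; rw [Module.Basis.mk_apply]
  have hbasD : ∀ j : ↥(Jset W χ n),
      basD j = Submodule.Quotient.mk (tb b.dualBasis (j : Fin d → Fin n)) := by
    intro j
    rw [Module.Basis.reindex_apply, Module.Basis.mk_apply]
    rfl
  -- the matrix of Bform in these bases is diagonal with unit entries
  have hmat : ∀ j k : ↥(Jset W χ n),
      Bform (E := E) W χ (basE j) (basD k)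
        = (stabCard W (j : Fin d → Fin n) : K) * (if j = k then 1 else 0) := by
    intro j k
    rw [hbasE, hbasD, hmk2]
    rcases eq_or_ne j k with rfl | hne
    · rw [if_pos rfl, mul_one, sumChi_self W χ _ (j.2.1)]
    · rw [if_neg hne, mul_zero,
        sumChi_ne W χ j.2 k.2 (fun h => hne (Subtype.ext h))]
  set u : ↥(Jset W χ n) → Kˣ :=
    fun j => (stabCard_isUnit W hcard (j : Fin d → Fin n)).unit with hu
  have huval : ∀ j, ((u j : Kˣ) : K) = (stabCard W (j : Fin d → Fin n) : K) := by
    intro j; rw [hu]; exact (stabCard_isUnit W hcard _).unit_spec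
  let basC : Module.Basis ↥(Jset W χ n) K (Module.Dual K (SemiPow (Module.Dual K E) W χ⁻¹)) :=
    basD.dualBasis.unitsSMul u
  have hBE : ∀ j : ↥(Jset W χ n), Bform (E := E) W χ (basE j) = basC j := by
    intro j
    apply basD.ext
    intro k
    rw [hmat j k]
    have : basC j = ((u j : Kˣ) : K) • basD.dualBasis j := by
      rw [Module.Basis.unitsSMul_apply, Units.smul_def]
    rw [this, LinearMap.smul_apply, Module.Basis.dualBasis_apply_self, huval, smul_eq_mul]
    congr 1
    by_cases h : j = k
    · rw [if_pos h, if_pos h.symm]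
    · rw [if_neg h, if_neg (Ne.symm h)]
  have hBeq : (Bform (E := E) W χ) = (basE.equiv basC (Equiv.refl _)).toLinearMap := by
    apply basE.ext
    intro j
    rw [hBE j, LinearEquiv.coe_coe, Module.Basis.equiv_apply, Equiv.refl_apply]
  -- flip
  let basC2 : Module.Basis ↥(Jset W χ n) K (Module.Dual K (SemiPow E W χ)) :=
    basE.dualBasis.unitsSMul u
  have hBD : ∀ k : ↥(Jset W χ n),
      (Bform (E := E) W χ).flip (basD k) = basC2 k := by
    intro k
    apply basE.ext
    intro j
    rw [LinearMap.flip_apply, hmat j k]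
    have : basC2 k = ((u k : Kˣ) : K) • basE.dualBasis k := by
      rw [Module.Basis.unitsSMul_apply, Units.smul_def]
    rw [this, LinearMap.smul_apply, Module.Basis.dualBasis_apply_self, huval, smul_eq_mul]
    by_cases h : j = k
    · rw [if_pos h, h]
    · rw [if_neg h, mul_zero, mul_zero]
  have hBeq2 : (Bform (E := E) W χ).flip = (basD.equiv basC2 (Equiv.refl _)).toLinearMap := by
    apply basD.ext
    intro k
    rw [hBD k, LinearEquiv.coe_coe, Module.Basis.equiv_apply, Equiv.refl_apply]
  refine ⟨Bform W χ, ?_, hJK, ?_, ?_, ?_⟩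
  · intro x y
    have h1 : semiMk W χ x = Submodule.Quotient.mk (PiTensorProduct.tprod K x) := rfl
    have h2 : semiMk W χ⁻¹ y = Submodule.Quotient.mk (PiTensorProduct.tprod K y) := rfl
    rw [h1, h2, Bform_mk, B0_tprod]
  · rw [hBeq]; exact (basE.equiv basC (Equiv.refl _)).bijective
  · rw [hBeq2]; exact (basD.equiv basC2 (Equiv.refl _)).bijective
  · intro j k hj hk
    rw [map_smul, hJK j k hj hk, smul_eq_mul]
    rcases eq_or_ne j k with rfl | hne
    · rw [if_pos rfl, mul_one, Ring.inverse_mul_cancel _ (stabCard_isUnit W hcard j)]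
    · rw [if_neg hne, mul_zero, mul_zero]
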